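/- The function M is twice differentiable at 0 and (1/μ²)·M″(0) equals: 2(3Bρ³ + (3B+3)ρ² + (2B+4)ρ + B + 3) / (μ²ρ²(1 + B + Bρ)) if ρ = β, and 2(β^{B+3}(3ρ³+3ρ²+2ρ+1) − ρ^{B+3}(3β³+3β²+2β+1)) / (μ²·(β^{B+3}ρ²(1+ρ) − ρ^{B+3}β²(β+1))) if ρ ≠ β. -/

import Mathlib

private lemma hq4 (a b c d e x : ℝ) :
    HasDerivAt (fun y : ℝ => a + b*y + c*y^2 + d*y^3 + e*y^4)
      (b + 2*c*x + 3*d*x^2 + 4*e*x^3) x := by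
  have h := ((((hasDerivAt_const x a).add ((hasDerivAt_id x).const_mul b)).add
      ((hasDerivAt_pow 2 x).const_mul c)).add
      ((hasDerivAt_pow 3 x).const_mul d)).add
      ((hasDerivAt_pow 4 x).const_mul e)
  refine h.congr_deriv ?_
  push_cast
  ring

private lemma hq3 (a b c d x : ℝ) :
    HasDerivAt (fun y : ℝ => a + b*y + c*y^2 + d*y^3)
      (b + 2*c*x + 3*d*x^2) x := by
  have h := (((hasDerivAt_const x a).add ((hasDerivAt_id x).const_mul b)).add
      ((hasDerivAt_pow 2 x).const_mul c)).add
      ((hasDerivAt_pow 3 x).const_mul d)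
  refine h.congr_deriv ?_
  push_cast
  ring

private lemma master (c b0 b1 b2 a0 a1 a2 a3 a4 : ℝ) (M : ℝ → ℝ) (ha0 : a0 ≠ 0)
    (hM : M = fun x => c * (b0 + b1*x + b2*x^2 + 0*x^3 + 0*x^4)
      / (a0 + a1*x + a2*x^2 + a3*x^3 + a4*x^4)) :
    DifferentiableAt ℝ M 0 ∧ DifferentiableAt ℝ (deriv M) 0 ∧
    deriv (deriv M) 0 =
      c*(2*b2*a0^2 - 2*b0*a2*a0 - 2*b1*a1*a0 + 2*b0*a1^2)/a0^3 := by
  subst hM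
  set D : ℝ → ℝ := fun y => a0 + a1*y + a2*y^2 + a3*y^3 + a4*y^4 with hDdef
  have hD : ∀ x, HasDerivAt D (a1 + 2*a2*x + 3*a3*x^2 + 4*a4*x^3) x := fun x => hq4 _ _ _ _ _ x
  have hN : ∀ x : ℝ, HasDerivAt (fun y : ℝ => b0 + b1*y + b2*y^2 + 0*y^3 + 0*y^4)
      (b1 + 2*b2*x + 3*0*x^2 + 4*0*x^3) x := fun x => hq4 _ _ _ _ _ x
  have hD0 : D 0 ≠ 0 := by simpa [hDdef] using ha0
  have key : ∀ x : ℝ, D x ≠ 0 →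
      HasDerivAt (fun x => c * (b0 + b1*x + b2*x^2 + 0*x^3 + 0*x^4) / D x)
        ((c * (b1 + 2*b2*x + 3*0*x^2 + 4*0*x^3) * D x
          - c * (b0 + b1*x + b2*x^2 + 0*x^3 + 0*x^4) * (a1 + 2*a2*x + 3*a3*x^2 + 4*a4*x^3))
          / D x ^ 2) x := by
    intro x hx
    exact ((hN x).const_mul c).div (hD x) hx
  have hev : ∀ᶠ x in nhds (0:ℝ), D x ≠ 0 :=
    ((hD 0).differentiableAt.continuousAt).eventually_ne hD0
  refine ⟨(key 0 hD0).differentiableAt, ?_, ?_⟩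
  all_goals {
    have hderiv : deriv (fun x => c * (b0 + b1*x + b2*x^2 + 0*x^3 + 0*x^4) / D x)
        =ᶠ[nhds (0:ℝ)]
        (fun x => (c * (b1 + 2*b2*x + 3*0*x^2 + 4*0*x^3) * D x
          - c * (b0 + b1*x + b2*x^2 + 0*x^3 + 0*x^4) * (a1 + 2*a2*x + 3*a3*x^2 + 4*a4*x^3))
          / D x ^ 2) := hev.mono (fun x hx => (key x hx).deriv)
    have hD1 : ∀ x : ℝ, HasDerivAt (fun y : ℝ => a1 + 2*a2*y + 3*a3*y^2 + 4*a4*y^3)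
        (2*a2 + 2*(3*a3)*x + 3*(4*a4)*x^2) x := fun x => hq3 _ _ _ _ x
    have hN1 : ∀ x : ℝ, HasDerivAt (fun y : ℝ => b1 + 2*b2*y + 3*0*y^2 + 4*0*y^3)
        (2*b2 + 2*(3*0)*x + 3*(4*0)*x^2) x := fun x => hq3 _ _ _ _ x
    have hF : HasDerivAt (fun x => c * (b1 + 2*b2*x + 3*0*x^2 + 4*0*x^3) * D x
        - c * (b0 + b1*x + b2*x^2 + 0*x^3 + 0*x^4) * (a1 + 2*a2*x + 3*a3*x^2 + 4*a4*x^3))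
        ((c * (2*b2 + 2*(3*0)*(0:ℝ) + 3*(4*0)*(0:ℝ)^2) * D 0
            + c * (b1 + 2*b2*0 + 3*0*(0:ℝ)^2 + 4*0*(0:ℝ)^3) * (a1 + 2*a2*0 + 3*a3*(0:ℝ)^2 + 4*a4*(0:ℝ)^3))
          - (c * (b1 + 2*b2*0 + 3*0*(0:ℝ)^2 + 4*0*(0:ℝ)^3) * (a1 + 2*a2*0 + 3*a3*(0:ℝ)^2 + 4*a4*(0:ℝ)^3)
            + c * (b0 + b1*0 + b2*(0:ℝ)^2 + 0*(0:ℝ)^3 + 0*(0:ℝ)^4) * (2*a2 + 2*(3*a3)*(0:ℝ) + 3*(4*a4)*(0:ℝ)^2)))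
        0 := (((hN1 0).const_mul c).mul (hD 0)).sub (((hN 0).const_mul c).mul (hD1 0))
    have hQ : HasDerivAt (fun x => D x ^ 2)
        ((2:ℕ) * D 0 ^ (2-1) * (a1 + 2*a2*0 + 3*a3*(0:ℝ)^2 + 4*a4*(0:ℝ)^3)) 0 := (hD 0).pow 2
    have hM1 := hF.div hQ (pow_ne_zero 2 hD0)
    first
    | exact (hderiv.differentiableAt_iff.mpr hM1.differentiableAt)
    | { rw [hderiv.deriv_eq]; erw [hM1.deriv]
        have e0 : D 0 = a0 := by simp [hDdef]
        rw [e0]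
        field_simp
        ring }
  }
/-- Second moment of AoI for LCFS-NP (EH only when system is empty), from the MGF. -/
theorem stmt_4 (rho beta mu : ℝ) (hrho : 0 < rho) (hbeta : 0 < beta) (hmu : 0 < mu)
    (B : ℕ) (hB : 1 ≤ B)
    (theta pi1 : ℝ)
    (htheta : theta = if rho = beta then (B : ℝ)
      else beta * (beta ^ B - rho ^ B) / (rho ^ B * (beta - rho)))
    (hpi1 : pi1 = if rho = beta then 1 / (1 + (B : ℝ) * (1 + rho))
      else rho ^ B * (beta - rho) /
        (rho ^ B * (beta - rho) + beta * (1 + rho) * (beta ^ B - rho ^ B)))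
    (M : ℝ → ℝ)
    (hM : ∀ x, M x = rho * pi1 * (x ^ 2 * theta - x * theta * (1 + rho + beta)
        + beta * (1 + theta + theta * rho))
      / ((1 - x) ^ 2 * (rho - x) * (beta - x))) :
    DifferentiableAt ℝ M 0 ∧ DifferentiableAt ℝ (deriv M) 0 ∧
    (1 / mu ^ 2) * deriv (deriv M) 0 =
      if rho = beta then
        2 * (3 * (B : ℝ) * rho ^ 3 + (3 * (B : ℝ) + 3) * rho ^ 2
            + (2 * (B : ℝ) + 4) * rho + (B : ℝ) + 3)
          / (mu ^ 2 * rho ^ 2 * (1 + (B : ℝ) + (B : ℝ) * rho))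
      else
        2 * (beta ^ (B + 3) * (3 * rho ^ 3 + 3 * rho ^ 2 + 2 * rho + 1)
            - rho ^ (B + 3) * (3 * beta ^ 3 + 3 * beta ^ 2 + 2 * beta + 1))
          / (mu ^ 2 * (beta ^ (B + 3) * rho ^ 2 * (1 + rho)
            - rho ^ (B + 3) * beta ^ 2 * (beta + 1))) := by
  have hr0 : rho ≠ 0 := hrho.ne'
  have hb0 : beta ≠ 0 := hbeta.ne'
  have hm0 : mu ≠ 0 := hmu.ne'
  have ha0 : rho * beta ≠ 0 := mul_ne_zero hr0 hb0
  have hMeq : M = fun x => (rho * pi1) *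
      ((beta * (1 + theta + theta * rho)) + (-(theta * (1 + rho + beta)))*x + theta*x^2
        + 0*x^3 + 0*x^4)
      / ((rho*beta) + (-((rho+beta)+2*rho*beta))*x + (1+2*(rho+beta)+rho*beta)*x^2
        + (-(2+(rho+beta)))*x^3 + 1*x^4) := by
    funext x
    rw [hM x]
    congr 1
    · ring
    · ring
  obtain ⟨h1, h2, h3⟩ := master (rho*pi1) (beta * (1 + theta + theta * rho))
      (-(theta * (1 + rho + beta))) theta (rho*beta) (-((rho+beta)+2*rho*beta))
      (1+2*(rho+beta)+rho*beta) (-(2+(rho+beta))) 1 M ha0 hMeq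
  refine ⟨h1, h2, ?_⟩
  rw [h3]
  by_cases hrb : rho = beta
  · rw [if_pos hrb]
    rw [if_pos hrb] at htheta
    rw [if_pos hrb] at hpi1
    subst hrb
    subst htheta hpi1
    have hBpos : (0:ℝ) < 1 + (B : ℝ) * (1 + rho) := by positivity
    have hB2 : (0:ℝ) < 1 + (B : ℝ) + (B : ℝ) * rho := by positivity
    field_simp [hr0, hm0, hBpos.ne', hB2.ne']
    ring
  · rw [if_neg hrb]
    rw [if_neg hrb] at htheta
    rw [if_neg hrb] at hpi1
    have hbr : beta - rho ≠ 0 := sub_ne_zero.mpr (Ne.symm hrb)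
    have hrB : rho ^ B ≠ 0 := pow_ne_zero _ hr0
    have hbB : beta ^ B ≠ 0 := pow_ne_zero _ hb0
    have hX : beta^(B+3)*rho^2*(1+rho) - rho^(B+3)*beta^2*(beta+1) ≠ 0 := by
      have e : beta^(B+3)*rho^2*(1+rho) - rho^(B+3)*beta^2*(beta+1)
          = rho^2*beta^2*((beta^(B+1)-rho^(B+1)) + rho*beta*(beta^B-rho^B)) := by ring
      rw [e]
      rcases lt_or_gt_of_ne hrb with h | h
      · have h1 : rho ^ (B+1) < beta ^ (B+1) := pow_lt_pow_left₀ h hrho.le (by omega)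
        have h2 : rho ^ B < beta ^ B := pow_lt_pow_left₀ h hrho.le (by omega)
        have := sub_pos.mpr h1
        have := sub_pos.mpr h2
        positivity
      · have h1 : beta ^ (B+1) < rho ^ (B+1) := pow_lt_pow_left₀ h hbeta.le (by omega)
        have h2 : beta ^ B < rho ^ B := pow_lt_pow_left₀ h hbeta.le (by omega)
        have hlt : rho^2*beta^2*((beta^(B+1)-rho^(B+1)) + rho*beta*(beta^B-rho^B)) < 0 := by
          apply mul_neg_of_pos_of_neg (by positivity)
          exact add_neg (sub_neg.mpr h1)
            (mul_neg_of_pos_of_neg (by positivity) (sub_neg.mpr h2))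
        exact hlt.ne
    have hden2 : rho ^ B * (beta - rho) + beta * (1 + rho) * (beta ^ B - rho ^ B) ≠ 0 := by
      rcases lt_or_gt_of_ne hrb with h | h
      · have h2 : rho ^ B < beta ^ B := pow_lt_pow_left₀ h hrho.le (by omega)
        have := sub_pos.mpr h
        have := sub_pos.mpr h2
        positivity
      · have h2 : beta ^ B < rho ^ B := pow_lt_pow_left₀ h hbeta.le (by omega)
        have hlt : rho ^ B * (beta - rho) + beta * (1 + rho) * (beta ^ B - rho ^ B) < 0 :=
          add_neg (mul_neg_of_pos_of_neg (by positivity) (sub_neg.mpr h))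
            (mul_neg_of_pos_of_neg (by positivity) (sub_neg.mpr h2))
        exact hlt.ne
    have hX' : rho ^ 2 * beta ^ 3 * beta ^ B - rho ^ 3 * rho ^ B * beta ^ 2 - rho ^ 3 * rho ^ B * beta ^ 3 +
        rho ^ 3 * beta ^ 3 * beta ^ B ≠ 0 := by
      convert hX using 1
      ring
    subst htheta hpi1
    rw [eq_div_iff (mul_ne_zero (pow_ne_zero 2 hm0) hX)]
    field_simp [hr0, hb0, hm0, hbr, hrB, hden2, hX, hX']
    ring
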